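/- If q ≤ Q* and the optimal policy π* belongs to the policy set Π̂ with N ≥ n+1, then ‖G q − Q*‖_∞ ≤ γ^{n+1} ‖q − Q*‖_∞ (exponential contraction rate). -/

import Mathlib

open Finset Filter Topology

/-- A transition kernel: for each state-action pair, a probability distribution over states. -/
def IsKernel {S A : Type*} [Fintype S] (P : S × A → S → ℝ) : Prop :=
  ∀ p, (∀ s', 0 ≤ P p s') ∧ ∑ s', P p s' = 1

/-- A (stochastic) policy: for each state, a probability distribution over actions. -/
def IsPolicy {S A : Type*} [Fintype A] (π : S → A → ℝ) : Prop :=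
  ∀ s, (∀ a, 0 ≤ π s a) ∧ ∑ a, π s a = 1

/-- Bellman optimality operator: (B Q)(s,a) = r(s,a) + γ ∑_{s'} P(s'|s,a) max_{a'} Q(s',a'). -/
noncomputable def bOpt {S A : Type*} [Fintype S] [Fintype A] [Nonempty A]
    (P : S × A → S → ℝ) (r : S × A → ℝ) (γ : ℝ) (Q : S × A → ℝ) : S × A → ℝ :=
  fun p => r p + γ * ∑ s', P p s' * (univ.sup' univ_nonempty fun a' => Q (s', a'))

/-- Bellman expectation operator for policy π:
    (B^π Q)(s,a) = r(s,a) + γ ∑_{s'} P(s'|s,a) ∑_{a'} π(a'|s') Q(s',a'). -/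
noncomputable def bExp {S A : Type*} [Fintype S] [Fintype A]
    (P : S × A → S → ℝ) (r : S × A → ℝ) (γ : ℝ) (π : S → A → ℝ) (Q : S × A → ℝ) :
    S × A → ℝ :=
  fun p => r p + γ * ∑ s', P p s' * ∑ a', π s' a' * Q (s', a')

/-- Greedy Multi-Step Bellman Operator: G Q = max_{π ∈ Π̂} max_{1 ≤ n ≤ N} (B^π)^{n-1} B Q,
    componentwise, over a finite nonempty policy set indexed by ι. -/
noncomputable def gOp {S A : Type*} [Fintype S] [Fintype A] [Nonempty A]
    (P : S × A → S → ℝ) (r : S × A → ℝ) (γ : ℝ)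
    {ι : Type*} [Fintype ι] [Nonempty ι] (pol : ι → S → A → ℝ)
    (N : ℕ) (hN : 1 ≤ N) (Q : S × A → ℝ) : S × A → ℝ :=
  fun p => univ.sup' univ_nonempty fun i =>
    (Icc 1 N).sup' (nonempty_Icc.mpr hN) fun n =>
      ((bExp P r γ (pol i))^[n - 1] (bOpt P r γ Q)) p

section Aux

variable {S A : Type*} [Fintype S] [Fintype A] [Nonempty A]
variable (P : S × A → S → ℝ) (r : S × A → ℝ) (γ : ℝ)

lemma bExp_mono_aux (hγ : 0 ≤ γ) (hP : IsKernel P) (π : S → A → ℝ) (hπ : IsPolicy π)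
    {Q1 Q2 : S × A → ℝ} (h : ∀ p, Q1 p ≤ Q2 p) (p : S × A) :
    bExp P r γ π Q1 p ≤ bExp P r γ π Q2 p := by
  unfold bExp
  apply add_le_add_right
  apply mul_le_mul_of_nonneg_left _ hγ
  apply Finset.sum_le_sum; intro s' _
  apply mul_le_mul_of_nonneg_left _ ((hP p).1 s')
  apply Finset.sum_le_sum; intro a' _
  exact mul_le_mul_of_nonneg_left (h _) ((hπ s').1 a')

lemma bOpt_mono_aux (hγ : 0 ≤ γ) (hP : IsKernel P)
    {Q1 Q2 : S × A → ℝ} (h : ∀ p, Q1 p ≤ Q2 p) (p : S × A) :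
    bOpt P r γ Q1 p ≤ bOpt P r γ Q2 p := by
  unfold bOpt
  apply add_le_add_right
  apply mul_le_mul_of_nonneg_left _ hγ
  apply Finset.sum_le_sum; intro s' _
  apply mul_le_mul_of_nonneg_left _ ((hP p).1 s')
  apply Finset.sup'_le; intro a _
  exact le_trans (h _) (Finset.le_sup' (fun a' => Q2 (s', a')) (mem_univ a))

lemma bExp_le_bOpt_aux (hγ : 0 ≤ γ) (hP : IsKernel P) (π : S → A → ℝ) (hπ : IsPolicy π)
    (Q : S × A → ℝ) (p : S × A) :
    bExp P r γ π Q p ≤ bOpt P r γ Q p := by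
  unfold bExp bOpt
  apply add_le_add_right
  apply mul_le_mul_of_nonneg_left _ hγ
  apply Finset.sum_le_sum; intro s' _
  apply mul_le_mul_of_nonneg_left _ ((hP p).1 s')
  calc ∑ a', π s' a' * Q (s', a')
      ≤ ∑ a', π s' a' * (univ.sup' univ_nonempty fun a' => Q (s', a')) := by
        apply Finset.sum_le_sum; intro a' _
        exact mul_le_mul_of_nonneg_left (Finset.le_sup' (fun a' => Q (s', a')) (mem_univ a')) ((hπ s').1 a')
    _ = univ.sup' univ_nonempty fun a' => Q (s', a') := by
        rw [← Finset.sum_mul, (hπ s').2, one_mul]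

lemma bExp_shift_aux (hP : IsKernel P) (π : S → A → ℝ) (hπ : IsPolicy π)
    (Q : S × A → ℝ) (c : ℝ) (p : S × A) :
    bExp P r γ π (fun p' => Q p' - c) p = bExp P r γ π Q p - γ * c := by
  unfold bExp
  have hinner : ∀ s' : S, (∑ a', π s' a' * (Q (s', a') - c))
      = (∑ a', π s' a' * Q (s', a')) - c := by
    intro s'
    calc ∑ a', π s' a' * (Q (s', a') - c)
        = ∑ a', (π s' a' * Q (s', a') - π s' a' * c) := by simp [mul_sub]
      _ = (∑ a', π s' a' * Q (s', a')) - (∑ a', π s' a') * c := by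
          rw [Finset.sum_sub_distrib, Finset.sum_mul]
      _ = (∑ a', π s' a' * Q (s', a')) - c := by rw [(hπ s').2, one_mul]
  have houter : (∑ s', P p s' * ((∑ a', π s' a' * Q (s', a')) - c))
      = (∑ s', P p s' * ∑ a', π s' a' * Q (s', a')) - c := by
    calc ∑ s', P p s' * ((∑ a', π s' a' * Q (s', a')) - c)
        = ∑ s', (P p s' * (∑ a', π s' a' * Q (s', a')) - P p s' * c) := by simp [mul_sub]
      _ = (∑ s', P p s' * ∑ a', π s' a' * Q (s', a')) - (∑ s', P p s') * c := by
          rw [Finset.sum_sub_distrib, Finset.sum_mul]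
      _ = _ := by rw [(hP p).2, one_mul]
  simp only [hinner, houter]
  ring

lemma sup'_sub_const_aux {β : Type*} [Fintype β] [Nonempty β] (f : β → ℝ) (c : ℝ) :
    (univ.sup' univ_nonempty fun b => f b - c) = (univ.sup' univ_nonempty f) - c := by
  apply le_antisymm
  · apply Finset.sup'_le; intro b _
    exact sub_le_sub_right (Finset.le_sup' f (mem_univ b)) c
  · rw [sub_le_iff_le_add]
    apply Finset.sup'_le; intro b _
    rw [← sub_le_iff_le_add]
    exact Finset.le_sup' (fun b => f b - c) (mem_univ b)

lemma bOpt_shift_aux (hP : IsKernel P) (Q : S × A → ℝ) (c : ℝ) (p : S × A) :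
    bOpt P r γ (fun p' => Q p' - c) p = bOpt P r γ Q p - γ * c := by
  unfold bOpt
  have hinner : ∀ s' : S, (univ.sup' univ_nonempty fun a' => Q (s', a') - c)
      = (univ.sup' univ_nonempty fun a' => Q (s', a')) - c := fun s' =>
    sup'_sub_const_aux (fun a' => Q (s', a')) c
  have houter : (∑ s', P p s' * ((univ.sup' univ_nonempty fun a' => Q (s', a')) - c))
      = (∑ s', P p s' * (univ.sup' univ_nonempty fun a' => Q (s', a'))) - c := by
    calc ∑ s', P p s' * ((univ.sup' univ_nonempty fun a' => Q (s', a')) - c)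
        = ∑ s', (P p s' * (univ.sup' univ_nonempty fun a' => Q (s', a')) - P p s' * c) := by
          simp [mul_sub]
      _ = (∑ s', P p s' * (univ.sup' univ_nonempty fun a' => Q (s', a')))
          - (∑ s', P p s') * c := by rw [Finset.sum_sub_distrib, Finset.sum_mul]
      _ = _ := by rw [(hP p).2, one_mul]
  simp only [hinner, houter]
  ring

end Aux

/-- if q ≤ Q* and the optimal policy π* belongs to Π̂ with N ≥ n+1, then
    ‖G q − Q*‖ ≤ γ^{n+1} ‖q − Q*‖. -/
theorem greedy_multistep_exponential_contraction
    {S A : Type*} [Fintype S] [Fintype A] [Nonempty S] [Nonempty A]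
    (P : S × A → S → ℝ) (r : S × A → ℝ) (γ : ℝ) (hγ0 : 0 < γ) (hγ1 : γ < 1)
    (hP : IsKernel P)
    {ι : Type*} [Fintype ι] [Nonempty ι]
    (pol : ι → S → A → ℝ) (hpol : ∀ i, IsPolicy (pol i))
    (N : ℕ) (hN : 1 ≤ N)
    (Qstar : S × A → ℝ) (hQ : bOpt P r γ Qstar = Qstar)
    (πstar : S → A → ℝ) (hπstar : IsPolicy πstar)
    (hopt : bExp P r γ πstar Qstar = Qstar)
    (hmem : ∃ i, pol i = πstar)
    (n : ℕ) (hn : n + 1 ≤ N)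
    (q : S × A → ℝ) (hq : ∀ p, q p ≤ Qstar p) :
    ‖gOp P r γ pol N hN q - Qstar‖ ≤ γ ^ (n + 1) * ‖q - Qstar‖ := by
  have hγ : (0:ℝ) ≤ γ := le_of_lt hγ0
  set c := ‖q - Qstar‖ with hc
  have hc0 : 0 ≤ c := norm_nonneg _
  have hlow : ∀ p, Qstar p - c ≤ q p := by
    intro p
    have h1 : ‖(q - Qstar) p‖ ≤ c := norm_le_pi_norm (q - Qstar) p
    rw [Pi.sub_apply, Real.norm_eq_abs, abs_le] at h1
    linarith [h1.1]
  -- Upper bound: every term of G q is ≤ Q*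
  have hub : ∀ (π : S → A → ℝ), IsPolicy π → ∀ (m : ℕ) (p : S × A),
      ((bExp P r γ π)^[m] (bOpt P r γ q)) p ≤ Qstar p := by
    intro π hπ m
    induction m with
    | zero =>
      intro p
      simpa using le_of_le_of_eq (bOpt_mono_aux P r γ hγ hP hq p)
        (congrFun hQ p)
    | succ m ih =>
      intro p
      rw [Function.iterate_succ_apply']
      calc bExp P r γ π ((bExp P r γ π)^[m] (bOpt P r γ q)) p
          ≤ bExp P r γ π Qstar p := bExp_mono_aux P r γ hγ hP π hπ ih p
        _ ≤ bOpt P r γ Qstar p := bExp_le_bOpt_aux P r γ hγ hP π hπ Qstar p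
        _ = Qstar p := congrFun hQ p
  have hGle : ∀ p, gOp P r γ pol N hN q p ≤ Qstar p := by
    intro p
    apply Finset.sup'_le; intro i _
    apply Finset.sup'_le; intro m _
    exact hub (pol i) (hpol i) (m - 1) p
  -- Lower bound via the optimal policy
  have hiter : ∀ (m : ℕ) (p : S × A),
      Qstar p - γ ^ (m + 1) * c ≤ ((bExp P r γ πstar)^[m] (bOpt P r γ q)) p := by
    intro m
    induction m with
    | zero =>
      intro p
      have h1 : bOpt P r γ (fun p' => Qstar p' - c) p ≤ bOpt P r γ q p :=
        bOpt_mono_aux P r γ hγ hP hlow p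
      have h2 : bOpt P r γ (fun p' => Qstar p' - c) p = Qstar p - γ * c := by
        rw [bOpt_shift_aux P r γ hP Qstar c p, congrFun hQ p]
      simp only [Function.iterate_zero_apply, zero_add, pow_one]
      linarith
    | succ m ih =>
      intro p
      rw [Function.iterate_succ_apply']
      have h1 : bExp P r γ πstar (fun p' => Qstar p' - γ ^ (m + 1) * c) p
          ≤ bExp P r γ πstar ((bExp P r γ πstar)^[m] (bOpt P r γ q)) p :=
        bExp_mono_aux P r γ hγ hP πstar hπstar ih p
      have h2 : bExp P r γ πstar (fun p' => Qstar p' - γ ^ (m + 1) * c) p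
          = Qstar p - γ * (γ ^ (m + 1) * c) := by
        rw [bExp_shift_aux P r γ hP πstar hπstar Qstar (γ ^ (m + 1) * c) p,
          congrFun hopt p]
      have h3 : γ * (γ ^ (m + 1) * c) = γ ^ (m + 1 + 1) * c := by ring
      linarith [h1, h2.symm ▸ h1]
  have hGge : ∀ p, Qstar p - γ ^ (n + 1) * c ≤ gOp P r γ pol N hN q p := by
    intro p
    obtain ⟨i, hi⟩ := hmem
    have hmemIcc : n + 1 ∈ Icc 1 N := mem_Icc.mpr ⟨Nat.le_add_left 1 n, hn⟩
    have hterm : ((bExp P r γ (pol i))^[n + 1 - 1] (bOpt P r γ q)) p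
        ≤ gOp P r γ pol N hN q p := by
      apply le_trans _ (Finset.le_sup' _ (mem_univ i))
      exact Finset.le_sup' (fun m => ((bExp P r γ (pol i))^[m - 1] (bOpt P r γ q)) p) hmemIcc
    have heq : n + 1 - 1 = n := rfl
    rw [heq, hi] at hterm
    exact le_trans (hiter n p) hterm
  -- Conclude
  apply (pi_norm_le_iff_of_nonneg (by positivity)).mpr
  intro p
  rw [Pi.sub_apply, Real.norm_eq_abs, abs_le]
  constructor
  · linarith [hGge p]
  · have h1 : (0:ℝ) ≤ γ ^ (n + 1) * c := by positivity
    linarith [hGle p]
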